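/- arXiv:1305.7294 — 9 statements merged into one kernel-verified Lean document; each statement's English description precedes it below -/
import Mathlib

section
/- Let p be a prime, q a power of p, m ≥ 1, n = q^m - 1, and e = q^m - 2. For 0 ≤ i < n with base-q digits i_0, ..., i_{m-1}, define C_{e,q,m}(i) = Σ_{j=0}^{m-1} C(e, q^j·i mod n) mod p. Then C_{e,q,m}(i) ≡ C(q^m - 1, i)·(s_q(i) + m) mod p, where s_q(i) = Σ_{j=0}^{m-1} i_j is the base-q digit sum of i. -/
theorem stmt_1 (p s m q n e : ℕ) (hp : p.Prime) (hs : 1 ≤ s) (hq : q = p ^ s)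
    (hm : 1 ≤ m) (hn : n = q ^ m - 1) (he : e = q ^ m - 2)
    (i : ℕ) (hi : i < n) :
    (∑ j ∈ Finset.range m, Nat.choose e ((q ^ j * i) % n)) ≡
      Nat.choose (q ^ m - 1) i *
        ((∑ j ∈ Finset.range m, (i / q ^ j) % q) + m) [MOD p] := by
  have hp2 : 2 ≤ p := hp.two_le
  have hq2 : 2 ≤ q := by
    rw [hq]
    calc 2 ≤ p := hp2
      _ ≤ p ^ s := Nat.le_self_pow (by omega) p
  have hqm2 : 2 ≤ q ^ m := by
    calc 2 ≤ q := hq2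
      _ ≤ q ^ m := Nat.le_self_pow (by omega) q
  have hn1 : 1 ≤ n := by omega
  have hne : n = e + 1 := by omega
  have hpq : p ∣ q := by rw [hq]; exact dvd_pow_self p (by omega)
  have hq0 : (q : ZMod p) = 0 := (ZMod.natCast_eq_zero_iff q p).mpr hpq
  have hqm0 : ((q ^ m : ℕ) : ZMod p) = 0 := by
    push_cast; rw [hq0]; exact zero_pow (by omega)
  have hnneg : ((n : ℕ) : ZMod p) = -1 := by
    have h1 : ((n : ℕ) : ZMod p) + 1 = ((n + 1 : ℕ) : ZMod p) := by push_cast; ring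
    have h2 : n + 1 = q ^ m := by omega
    have : ((n : ℕ) : ZMod p) + 1 = 0 := by rw [h1, h2, hqm0]
    linear_combination this
  -- key1 : Pascal + divisibility
  have key1 : ∀ k, k + 1 < q ^ m →
      ((n.choose k : ZMod p) + (n.choose (k + 1) : ZMod p) = 0) := by
    intro k hk
    have hpas : (q ^ m).choose (k + 1) = n.choose k + n.choose (k + 1) := by
      have h2 : q ^ m = n + 1 := by omega
      rw [h2, Nat.choose_succ_succ]
    have hdvd : p ∣ (q ^ m).choose (k + 1) := by
      have hqm' : q ^ m = p ^ (s * m) := by rw [hq, ← pow_mul]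
      rw [hqm']
      exact Nat.Prime.dvd_choose_pow hp (by omega) (by rw [← hqm']; omega)
    have h0 : (((q ^ m).choose (k + 1) : ℕ) : ZMod p) = 0 :=
      (ZMod.natCast_eq_zero_iff _ p).mpr hdvd
    rw [hpas] at h0
    push_cast at h0
    linear_combination h0
  -- key2 : C(n, k) = (-1)^k in ZMod p
  have key2 : ∀ k, k ≤ n → ((n.choose k : ZMod p) = (-1) ^ k) := by
    intro k hk
    induction k with
    | zero => simp
    | succ k ih =>
      have h1 := key1 k (by omega)
      have h2 := ih (by omega)
      rw [h2] at h1
      have : (n.choose (k + 1) : ZMod p) = -(-1) ^ k := by linear_combination h1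
      rw [this]; ring
  -- key3 : C(e, k) = (k+1) * (-1)^k in ZMod p
  have key3 : ∀ k, k ≤ e → ((e.choose k : ZMod p) = (k + 1) * (-1) ^ k) := by
    intro k hk
    have hmul : (e + 1) * e.choose k = (e + 1).choose (k + 1) * (k + 1) :=
      Nat.add_one_mul_choose_eq e k
    rw [← hne] at hmul
    have hc := congrArg (fun t : ℕ => (t : ZMod p)) hmul
    push_cast at hc
    rw [hnneg, key2 (k + 1) (by omega)] at hc
    have : (e.choose k : ZMod p) = -((-1) ^ (k + 1) * ((k : ZMod p) + 1)) := by
      linear_combination -hc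
    rw [this]; ring
  -- digit split formula
  have hsplit : ∀ j, j < m →
      q ^ j * i % n = i / q ^ (m - j) + q ^ j * (i % q ^ (m - j)) := by
    intro j hj
    set a := i / q ^ (m - j) with ha_def
    set b := i % q ^ (m - j) with hb_def
    have hqpos : 0 < q ^ (m - j) := Nat.pow_pos (by omega)
    have hqjpos : 0 < q ^ j := Nat.pow_pos (by omega)
    have hb : b < q ^ (m - j) := Nat.mod_lt _ hqpos
    have hab : i = q ^ (m - j) * a + b := (Nat.div_add_mod i (q ^ (m - j))).symm
    have hQR : q ^ j * q ^ (m - j) = q ^ m := by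
      rw [← pow_add]; congr 1; omega
    have ha : a < q ^ j := by
      rw [ha_def]
      apply Nat.div_lt_of_lt_mul
      calc i < q ^ m := by omega
        _ = q ^ (m - j) * q ^ j := by rw [← hQR]; ring
    have heq : q ^ j * i = n * a + (a + q ^ j * b) := by
      rw [hab, Nat.mul_add, ← Nat.mul_assoc, hQR]
      have h2 : q ^ m = n + 1 := by omega
      rw [h2]; ring
    have hlt : a + q ^ j * b < n := by
      have hin : q ^ (m - j) * a + b + 2 ≤ q ^ j * q ^ (m - j) := by
        rw [hQR]; omega
      rcases Nat.lt_or_ge (b + 2) (q ^ (m - j) + 1) with hb2 | hb2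
      · -- b + 2 ≤ q^(m-j)
        have h1 : q ^ j * (b + 2) ≤ q ^ j * q ^ (m - j) :=
          Nat.mul_le_mul_left _ (by omega)
        have : a + q ^ j * b + 2 ≤ q ^ m := by
          rw [← hQR]; nlinarith
        omega
      · -- b = q^(m-j) - 1
        have hbeq : b + 1 = q ^ (m - j) := by omega
        have h1 : q ^ (m - j) * (a + 1) < q ^ (m - j) * q ^ j := by
          calc q ^ (m - j) * (a + 1) = q ^ (m - j) * a + (b + 1) := by
                rw [hbeq]; ring
            _ < q ^ j * q ^ (m - j) := by omega
            _ = q ^ (m - j) * q ^ j := by ring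
        have ha2 : a + 2 ≤ q ^ j := by
          have := Nat.lt_of_mul_lt_mul_left h1
          omega
        have : a + q ^ j * b + 2 ≤ q ^ m := by
          calc a + q ^ j * b + 2 ≤ q ^ j + q ^ j * b := by omega
            _ = q ^ j * (b + 1) := by ring
            _ = q ^ j * q ^ (m - j) := by rw [hbeq]
            _ = q ^ m := hQR
        omega
    rw [heq, Nat.mul_add_mod, Nat.mod_eq_of_lt hlt]
  -- parity lemma
  have hpar : ∀ j, j < m → ((-1 : ZMod p)) ^ (q ^ j * i % n) = (-1) ^ i := by
    intro j hj
    by_cases hp2' : p = 2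
    · subst hp2'
      have hone : (-1 : ZMod 2) = 1 := rfl
      rw [hone, one_pow, one_pow]
    · have hpodd : p % 2 = 1 := Nat.odd_iff.mp (hp.odd_of_ne_two hp2')
      have hqodd : q % 2 = 1 := by
        rw [hq, Nat.pow_mod, hpodd, one_pow]
        omega
      have hpow2 : ∀ t : ℕ, q ^ t % 2 = 1 := by
        intro t; rw [Nat.pow_mod, hqodd, one_pow]
        omega
      rw [hsplit j hj]
      set a := i / q ^ (m - j) with ha_def
      set b := i % q ^ (m - j) with hb_def
      have hab : i = q ^ (m - j) * a + b := (Nat.div_add_mod i (q ^ (m - j))).symm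
      have h3 : q ^ j * b % 2 = b % 2 := by
        rw [Nat.mul_mod, hpow2 j, one_mul, Nat.mod_mod_of_dvd _ (dvd_refl 2)]
      have h4 : q ^ (m - j) * a % 2 = a % 2 := by
        rw [Nat.mul_mod, hpow2 (m - j), one_mul, Nat.mod_mod_of_dvd _ (dvd_refl 2)]
      have hmod : (a + q ^ j * b) % 2 = i % 2 := by omega
      rw [neg_one_pow_eq_pow_mod_two, hmod, ← neg_one_pow_eq_pow_mod_two]
  -- sum of low digits identity in ℕ
  have hsum : (∑ j ∈ Finset.range m, (q ^ j * i % n) % q)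
      = ∑ j ∈ Finset.range m, (i / q ^ j) % q := by
    obtain ⟨m', rfl⟩ : ∃ m', m = m' + 1 := ⟨m - 1, by omega⟩
    rw [Finset.sum_range_succ', Finset.sum_range_succ']
    congr 1
    · have hterm : ∀ j ∈ Finset.range m', (q ^ (j + 1) * i % n) % q
          = (i / q ^ (m' - j)) % q := by
        intro j hj
        simp only [Finset.mem_range] at hj
        rw [hsplit (j + 1) (by omega)]
        have hstep : m' + 1 - (j + 1) = m' - j := by omega
        rw [hstep]
        have : q ^ (j + 1) * (i % q ^ (m' - j)) = q * (q ^ j * (i % q ^ (m' - j))) := by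
          rw [pow_succ]; ring
        rw [this, Nat.add_mul_mod_self_left]
      rw [Finset.sum_congr rfl hterm,
        ← Finset.sum_range_reflect (fun t => (i / q ^ (t + 1)) % q) m']
      apply Finset.sum_congr rfl
      intro j hj
      simp only [Finset.mem_range] at hj
      have h5 : m' - 1 - j + 1 = m' - j := by omega
      rw [h5]
    · simp [Nat.mod_eq_of_lt hi]
  -- low digit extraction in ZMod p
  have hlow : ∀ j, j < m → ((q ^ j * i % n : ℕ) : ZMod p)
      = (((q ^ j * i % n) % q : ℕ) : ZMod p) := by
    intro j hj
    conv_lhs => rw [← Nat.div_add_mod (q ^ j * i % n) q]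
    push_cast
    rw [hq0]; ring
  -- assemble
  rw [← ZMod.natCast_eq_natCast_iff]
  push_cast
  have hstep1 : (∑ j ∈ Finset.range m, ((e.choose (q ^ j * i % n) : ℕ) : ZMod p))
      = ∑ j ∈ Finset.range m,
          ((((q ^ j * i % n) % q : ℕ) : ZMod p) + 1) * (-1) ^ i := by
    apply Finset.sum_congr rfl
    intro j hj
    simp only [Finset.mem_range] at hj
    have hmod : q ^ j * i % n < n := Nat.mod_lt _ (by omega)
    rw [key3 _ (by omega), hpar j hj, ← hlow j hj]
  rw [hstep1]
  have hchoose : ((q ^ m - 1).choose i : ZMod p) = (-1) ^ i := by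
    rw [← hn]; exact key2 i (by omega)
  rw [hchoose]
  have hsumcast : (∑ j ∈ Finset.range m, (((q ^ j * i % n) % q : ℕ) : ZMod p))
      = ∑ j ∈ Finset.range m, (((i / q ^ j) % q : ℕ) : ZMod p) := by
    rw [← Nat.cast_sum, ← Nat.cast_sum, hsum]
  calc (∑ j ∈ Finset.range m,
        ((((q ^ j * i % n) % q : ℕ) : ZMod p) + 1) * (-1) ^ i)
      = ((∑ j ∈ Finset.range m, (((q ^ j * i % n) % q : ℕ) : ZMod p)) + m)
          * (-1) ^ i := by
        rw [← Finset.sum_mul, Finset.sum_add_distrib, Finset.sum_const,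
          Finset.card_range, nsmul_eq_mul, mul_one]
    _ = ((∑ j ∈ Finset.range m, (((i / q ^ j) % q : ℕ) : ZMod p)) + m)
          * (-1) ^ i := by rw [hsumcast]
    _ = (-1) ^ i * ((∑ j ∈ Finset.range m, (((i / q ^ j) % q : ℕ) : ZMod p)) + m) := by
        ring
end

section
/- Let p be a prime, q a power of p, m ≥ 1, and n = q^m - 1. The number of integers i with 0 ≤ i ≤ n (equivalently, 0 ≤ i < q^m) whose base-q digit sum s_q(i) satisfies s_q(i) + m ≢ 0 mod p is exactly q^m·(1 - 1/p). -/
lemma base_count (p q c : ℕ) (hp : 0 < p) (hpq : p ∣ q) :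
    ((Finset.range q).filter (fun i => (i + c) % p = 0)).card = q / p := by
  have hc : c * (p - 1) + c = c * p := by
    rw [Nat.mul_sub, Nat.mul_one]
    have : c ≤ c * p := Nat.le_mul_of_pos_right _ hp
    omega
  have key : ∀ i, ((i + c) % p = 0) ↔ (i ≡ c * (p - 1) [MOD p]) := by
    intro i
    constructor
    · intro h
      apply Nat.ModEq.add_right_cancel' c
      show (i + c) % p = (c * (p - 1) + c) % p
      rw [hc, h, Nat.mul_mod_left]
    · intro h
      have h2 := h.add_right c
      have : (i + c) % p = (c * (p - 1) + c) % p := h2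
      rw [hc, Nat.mul_mod_left] at this
      exact this
  simp only [key]
  rw [← Nat.count_eq_card_filter_range, Nat.count_modEq_card _ hp]
  have hz : q % p = 0 := Nat.mod_eq_zero_of_dvd hpq
  simp [hz]

lemma digit_split (q k : ℕ) (a : ℕ) :
    (∑ j ∈ Finset.range (k + 1), (a / q ^ j) % q)
      = a % q + ∑ j ∈ Finset.range k, ((a / q) / q ^ j) % q := by
  rw [Finset.sum_range_succ']
  simp only [pow_zero, Nat.div_one]
  rw [add_comm]
  congr 1
  apply Finset.sum_congr rfl
  intro j _
  rw [Nat.div_div_eq_div_mul, ← pow_succ']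

lemma main_count (p q c k : ℕ) (hp : 0 < p) (hpq : p ∣ q) (hq : 0 < q) :
    ((Finset.range (q ^ (k + 1))).filter
      (fun i => ((∑ j ∈ Finset.range (k + 1), (i / q ^ j) % q) + c) % p = 0)).card
      = q ^ (k + 1) / p := by
  rw [Finset.card_filter]
  rw [show q ^ (k + 1) = q ^ k * q from by ring]
  rw [Finset.sum_nbij' (t := Finset.range (q ^ k) ×ˢ Finset.range q)
      (g := fun b : ℕ × ℕ =>
        if (b.2 + ((∑ j ∈ Finset.range k, (b.1 / q ^ j) % q) + c)) % p = 0 then 1 else 0)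
      (i := fun a => (a / q, a % q)) (j := fun b => q * b.1 + b.2)
      (by
        intro a ha
        simp only [Finset.mem_range, Finset.mem_product] at *
        exact ⟨Nat.div_lt_iff_lt_mul hq |>.mpr ha, Nat.mod_lt _ hq⟩)
      (by
        intro b hb
        simp only [Finset.mem_range, Finset.mem_product] at *
        calc q * b.1 + b.2 < q * b.1 + q := by omega
          _ = q * (b.1 + 1) := by ring
          _ ≤ q * q ^ k := Nat.mul_le_mul_left q hb.1
          _ = q ^ k * q := mul_comm _ _)
      (fun a _ => Nat.div_add_mod a q)
      (by
        intro b hb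
        simp only [Finset.mem_range, Finset.mem_product] at hb
        have h1 : (q * b.1 + b.2) / q = b.1 := by
          rw [Nat.mul_add_div hq, Nat.div_eq_of_lt hb.2, add_zero]
        have h2 : (q * b.1 + b.2) % q = b.2 := by
          rw [Nat.mul_add_mod, Nat.mod_eq_of_lt hb.2]
        simp [h1, h2])
      (by
        intro a _
        simp only [digit_split q k a, add_assoc])]
  rw [Finset.sum_product]
  have inner : ∀ t ∈ Finset.range (q ^ k),
      (∑ d ∈ Finset.range q,
        if (d + ((∑ j ∈ Finset.range k, (t / q ^ j) % q) + c)) % p = 0 then 1 else 0) = q / p := by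
    intro t _
    rw [← Finset.card_filter]
    exact base_count p q _ hp hpq
  rw [Finset.sum_congr rfl inner, Finset.sum_const, Finset.card_range, smul_eq_mul,
    Nat.mul_div_assoc _ hpq]

theorem stmt_2 (p s m q : ℕ) (hp : p.Prime) (hs : 1 ≤ s) (hq : q = p ^ s)
    (hm : 1 ≤ m) :
    ((Finset.range (q ^ m)).filter
        (fun i => ((∑ j ∈ Finset.range m, (i / q ^ j) % q) + m) % p ≠ 0)).card =
      q ^ m - q ^ m / p := by
  have hp0 : 0 < p := hp.pos
  have hpq : p ∣ q := hq ▸ dvd_pow_self p (by omega)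
  have hq0 : 0 < q := hq ▸ Nat.pow_pos hp0
  obtain ⟨k, rfl⟩ : ∃ k, m = k + 1 := ⟨m - 1, by omega⟩
  rw [Finset.filter_not, Finset.card_sdiff_of_subset (Finset.filter_subset _ _),
    Finset.card_range, main_count p q (k + 1) k hp0 hpq hq0]
end

section
/- Let m = 5i with i ≥ 2, and for 2 ≤ l ≤ i let y be a bit-sequence of length m of the form 0^{4i} 1 * ⋯ * 1 0^{i-l} where the block 1*⋯*1 has length l, starts and ends with 1, and the middle l-2 bits are arbitrary (i.e., y_j = 0 for j ≥ i, y_{i-1} = y_{i-l} = 1, y_j = 0 for 0 ≤ j < i-l). Then the m cyclic shifts of y are pairwise distinct; that is, the orbit of y under cyclic shifts has size exactly m. -/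
theorem stmt_5 (i l m : ℕ) (hi : 2 ≤ i) (hm : m = 5 * i)
    (hl2 : 2 ≤ l) (hli : l ≤ i) (y : ℕ → Bool)
    (h0 : ∀ j, i ≤ j → j < m → y j = false)
    (h1 : y (i - 1) = true) (h2 : y (i - l) = true)
    (h3 : ∀ j, j < i - l → y j = false) :
    ∀ j1 < m, ∀ j2 < m,
      (∀ k < m, y ((k + j1) % m) = y ((k + j2) % m)) → j1 = j2 := by
  have hm0 : 0 < m := by omega
  have key : ∀ j1 j2, j1 < j2 → j2 < m →
      (∀ k < m, y ((k + j1) % m) = y ((k + j2) % m)) → False := by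
    intro j1 j2 hlt hj2 hk
    set d := j2 - j1 with hd
    have hd0 : 0 < d := by omega
    have hdm : d < m := by omega
    have step : ∀ t, t < m → y t = y ((t + d) % m) := by
      intro t ht
      have hk' := hk ((t + (m - j1)) % m) (Nat.mod_lt _ hm0)
      have e1 : ((t + (m - j1)) % m + j1) % m = t := by
        rw [Nat.mod_add_mod, show t + (m - j1) + j1 = t + m by omega,
          Nat.add_mod_right, Nat.mod_eq_of_lt ht]
      have e2 : ((t + (m - j1)) % m + j2) % m = (t + d) % m := by
        rw [Nat.mod_add_mod, show t + (m - j1) + j2 = (t + d) + m by omega,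
          Nat.add_mod_right]
      rw [e1, e2] at hk'
      exact hk'
    have orbit : ∀ n, y ((i - 1 + n * d) % m) = true := by
      intro n
      induction n with
      | zero => simpa [Nat.mod_eq_of_lt (show i - 1 < m by omega)] using h1
      | succ n ih =>
        rw [show i - 1 + (n + 1) * d = (i - 1 + n * d) + d by ring]
        rw [← Nat.mod_add_mod]
        rw [← step _ (Nat.mod_lt _ hm0)]
        exact ih
    by_cases hc : i - 1 + d < m
    · have := orbit 1
      rw [one_mul, Nat.mod_eq_of_lt hc] at this
      have := h0 (i - 1 + d) (by omega) hc
      simp_all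
    · have := orbit (m - 1)
      have e3 : (i - 1 + (m - 1) * d) % m = i - 1 + m - d := by
        have hp : (m - 1) * d = m * d - 1 * d := by rw [Nat.sub_mul]
        have hq : (d - 1) * m = d * m - 1 * m := by rw [Nat.sub_mul]
        have hcomm : m * d = d * m := Nat.mul_comm _ _
        have hb1 : m ≤ d * m := Nat.le_mul_of_pos_left _ hd0
        have hb2 : d ≤ m * d := Nat.le_mul_of_pos_left _ hm0
        rw [show i - 1 + (m - 1) * d = (i - 1 + m - d) + (d - 1) * m by omega]
        rw [Nat.add_mul_mod_self_right, Nat.mod_eq_of_lt (by omega)]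
      rw [e3] at this
      have := h0 (i - 1 + m - d) (by omega) (by omega)
      simp_all
  intro j1 hj1 j2 hj2 hyp
  rcases lt_trichotomy j1 j2 with h | h | h
  · exact absurd (key j1 j2 h hj2 hyp) (by simp)
  · exact h
  · exact absurd (key j2 j1 h hj1 (fun k hk => (hyp k hk).symm)) (by simp)
end

section
/- Let m = 5i with i ≥ 2 and let e have binary bits e_j = 1 exactly for j ∈ {0,...,i-1} ∪ {2i, 3i, 4i}. Let y be a length-m bit sequence with y_j = 0 for j ≥ i, y_{i-1} = y_{i-l} = 1, and y_j = 0 for 0 ≤ j < i-l, where 2 ≤ l ≤ i. Then for 0 ≤ j ≤ i-1, the cyclic shift τ^j(y) is covered by e (meaning every 1-bit of τ^j(y) is a 1-bit of e) if and only if 0 ≤ j ≤ i-l. Consequently the number of cyclic shifts σ of y (over all σ = τ^j, 0 ≤ j < m) with σ(y) covered by e equals i - l + 1, and this count is odd if and only if l ≡ i mod 2. -/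
theorem stmt_6 (i l m : ℕ) (hi : 2 ≤ i) (hm : m = 5 * i)
    (hl2 : 2 ≤ l) (hli : l ≤ i) (y : ℕ → Bool)
    (h0 : ∀ j, i ≤ j → j < m → y j = false)
    (h1 : y (i - 1) = true) (h2 : y (i - l) = true)
    (h3 : ∀ j, j < i - l → y j = false) :
    (∀ j < i,
      ((∀ k < m, y ((k + j) % m) = true →
          (k < i ∨ k = 2 * i ∨ k = 3 * i ∨ k = 4 * i)) ↔ j ≤ i - l)) ∧
    ((Finset.range m).filter (fun j => ∀ k ∈ Finset.range m,
        y ((k + j) % m) = true →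
          (k < i ∨ k = 2 * i ∨ k = 3 * i ∨ k = 4 * i))).card = i - l + 1 ∧
    (Odd (i - l + 1) ↔ l % 2 = i % 2) := by
  subst hm
  have hmod : ∀ a : ℕ, a < 5 * i → (5 * i + a) % (5 * i) = a := by
    intro a ha
    rw [Nat.add_mod_left, Nat.mod_eq_of_lt ha]
  -- backward: j ≤ i - l → covered
  have hback : ∀ j, j ≤ i - l → ∀ k, k < 5 * i → y ((k + j) % (5 * i)) = true →
      (k < i ∨ k = 2 * i ∨ k = 3 * i ∨ k = 4 * i) := by
    intro j hj k hk hy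
    left
    have hrm : (k + j) % (5 * i) < 5 * i := Nat.mod_lt _ (by omega)
    have hr1 : (k + j) % (5 * i) < i := by
      by_contra h
      push_neg at h
      rw [h0 _ h hrm] at hy; exact absurd hy (by simp)
    have hr2 : i - l ≤ (k + j) % (5 * i) := by
      by_contra h
      push_neg at h
      rw [h3 _ h] at hy; exact absurd hy (by simp)
    have hcase : (k + j) % (5 * i) = k + j ∨ (k + j) % (5 * i) + 5 * i = k + j := by
      rcases Nat.lt_or_ge (k + j) (5 * i) with h | h
      · left; exact Nat.mod_eq_of_lt h
      · right; rw [Nat.mod_eq_sub_mod h, Nat.mod_eq_of_lt (by omega)]; omega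
    generalize (k + j) % (5 * i) = r at hr1 hr2 hcase
    rcases hcase with h | h <;> omega
  -- forward for j < i: covered → j ≤ i - l
  have hfwd : ∀ j, j < i → (∀ k, k < 5 * i → y ((k + j) % (5 * i)) = true →
      (k < i ∨ k = 2 * i ∨ k = 3 * i ∨ k = 4 * i)) → j ≤ i - l := by
    intro j hj hcov
    by_contra hjl
    push_neg at hjl
    have hk : 5 * i + (i - l) - j + j = 5 * i + (i - l) := by omega
    have := hcov (5 * i + (i - l) - j) (by omega)
    rw [hk, hmod _ (by omega), h2] at this
    have := this rfl
    omega
  -- j ≥ i: not covered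
  have hbig : ∀ j, i ≤ j → j < 5 * i → ¬ (∀ k, k < 5 * i → y ((k + j) % (5 * i)) = true →
      (k < i ∨ k = 2 * i ∨ k = 3 * i ∨ k = 4 * i)) := by
    intro j hij hjm hcov
    have e1 : 5 * i + (i - 1) - j + j = 5 * i + (i - 1) := by omega
    have e2 : 5 * i + (i - l) - j + j = 5 * i + (i - l) := by omega
    have c1 := hcov (5 * i + (i - 1) - j) (by omega)
    have c2 := hcov (5 * i + (i - l) - j) (by omega)
    rw [e1, hmod _ (by omega), h1] at c1
    rw [e2, hmod _ (by omega), h2] at c2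
    have c1 := c1 rfl
    have c2 := c2 rfl
    omega
  refine ⟨fun j hj => ⟨hfwd j hj, fun h k hk => hback j h k hk⟩, ?_, ?_⟩
  · rw [← Finset.card_range (i - l + 1)]
    congr 1
    ext j
    simp only [Finset.mem_filter, Finset.mem_range]
    constructor
    · rintro ⟨hjm, hcov⟩
      rcases Nat.lt_or_ge j i with h | h
      · have := hfwd j h (fun k hk => hcov k hk)
        omega
      · exact absurd (fun k hk => hcov k hk) (hbig j h hjm)
    · intro hjl
      exact ⟨by omega, fun k hk => hback j (by omega) k hk⟩
  · rw [Nat.odd_iff]; omega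
end

section
/- Let m = 5i with i ≥ 2 and let e be the length-m bit sequence with 1-bits exactly at positions {0,...,i-1} ∪ {2i,3i,4i}. Let y be a length-m bit sequence satisfying: y_j = 0 for j ≥ i, j ∉ {2i,3i,4i}; y_j = 1 for some j ∈ {2i,3i,4i}; and at least two indices j ∈ {0,...,i-1} have y_j = 1. If σ = τ^j is a cyclic shift with σ(y) covered by e, then j ≡ 0 mod m (σ is the identity). -/
lemma modcase_stmt9 (p t m : ℕ) (hp : p < m) (htm : t < m) :
    (p + t < m ∧ (p + t) % m = p + t) ∨ (m ≤ p + t ∧ (p + t) % m = p + t - m) := by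
  rcases lt_or_ge (p + t) m with h | h
  · exact Or.inl ⟨h, Nat.mod_eq_of_lt h⟩
  · exact Or.inr ⟨h, by rw [Nat.mod_eq_sub_mod h, Nat.mod_eq_of_lt (by omega)]⟩

theorem stmt_9 (i m : ℕ) (hi : 2 ≤ i) (hm : m = 5 * i) (y : ℕ → Bool)
    (h0 : ∀ j, i ≤ j → j < m → j ≠ 2 * i → j ≠ 3 * i → j ≠ 4 * i → y j = false)
    (h1 : y (2 * i) = true ∨ y (3 * i) = true ∨ y (4 * i) = true)
    (h2 : 2 ≤ ((Finset.range i).filter (fun j => y j = true)).card)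
    (j : ℕ) (hj : j < m)
    (hcov : ∀ k < m, y ((k + j) % m) = true →
      (k < i ∨ k = 2 * i ∨ k = 3 * i ∨ k = 4 * i)) : j = 0 := by
  by_contra hj0
  have hm0 : 0 < m := by omega
  set t := m - j with ht
  have htm : t < m := by omega
  have key : ∀ p, p < m → y p = true →
      ((p + t) % m < i ∨ (p + t) % m = 2 * i ∨ (p + t) % m = 3 * i ∨ (p + t) % m = 4 * i) := by
    intro p hp hyp
    apply hcov
    · exact Nat.mod_lt _ hm0
    · have heq : ((p + t) % m + j) % m = p := by
        rw [Nat.mod_add_mod]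
        have h5 : p + t + j = p + m := by omega
        rw [h5, Nat.add_mod_right, Nat.mod_eq_of_lt hp]
      rw [heq]; exact hyp
  obtain ⟨a, ha, b, hb, hab⟩ := Finset.one_lt_card.mp (by omega : 1 <
    ((Finset.range i).filter (fun j => y j = true)).card)
  simp only [Finset.mem_filter, Finset.mem_range] at ha hb
  obtain ⟨hai, hay⟩ := ha
  obtain ⟨hbi, hby⟩ := hb
  obtain ⟨c, hc, hcy⟩ : ∃ c, (c = 2 * i ∨ c = 3 * i ∨ c = 4 * i) ∧ y c = true := by
    rcases h1 with h | h | h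
    · exact ⟨2 * i, Or.inl rfl, h⟩
    · exact ⟨3 * i, Or.inr (Or.inl rfl), h⟩
    · exact ⟨4 * i, Or.inr (Or.inr rfl), h⟩
  have ham : a < m := by omega
  have hbm : b < m := by omega
  have hcm : c < m := by omega
  have pack : ∀ p, p < m → y p = true → ∃ r,
      ((p + t < m ∧ r = p + t) ∨ (m ≤ p + t ∧ r = p + t - m)) ∧
      (r < i ∨ r = 2 * i ∨ r = 3 * i ∨ r = 4 * i) := fun p hp hyp =>
    ⟨(p + t) % m, modcase_stmt9 p t m hp htm, key p hp hyp⟩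
  obtain ⟨ra, hra1, hra2⟩ := pack a ham hay
  obtain ⟨rb, hrb1, hrb2⟩ := pack b hbm hby
  obtain ⟨rc, hrc1, hrc2⟩ := pack c hcm hcy
  omega
end

section
/- Let m = 5i with i ≥ 2 and let e be the length-m bit sequence with 1-bits exactly at positions {0,...,i-1} ∪ {2i,3i,4i}. Let R₄ be the set of length-m bit sequences y of Hamming weight 4 covered by e such that the 1-bits of y at positions ≥ i are exactly {2i, 3i, 4i} and exactly one position in {0,...,i-1} carries a 1. Then |R₄| = i, and if τ^j(y) is covered by e for some y ∈ R₄, then j ≡ 0 mod m. -/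
private lemma aux_tb_one (m : ℕ) : Nat.testBit 1 m = decide (0 = m) := by
  simpa using (Nat.testBit_two_pow (n := 0) (m := m))

private lemma aux_bit (i a n : ℕ) (hi : 2 ≤ i) (ha : a < i) :
    (2 ^ a + 2 ^ (2 * i) + 2 ^ (3 * i) + 2 ^ (4 * i)).testBit n =
      (decide (n = a) || decide (n = 2 * i) || decide (n = 3 * i) ||
        decide (n = 4 * i)) := by
  have e1 : 2 ^ a + 2 ^ (2 * i) + 2 ^ (3 * i) + 2 ^ (4 * i)
      = 2 ^ (2 * i) * (1 + 2 ^ i + 2 ^ (2 * i)) + 2 ^ a := by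
    have h3 : 3 * i = 2 * i + i := by ring
    have h4 : 4 * i = 2 * i + 2 * i := by ring
    rw [h3, h4, pow_add, pow_add]; ring
  have hpa : 2 ^ a < 2 ^ (2 * i) := Nat.pow_lt_pow_right one_lt_two (by omega)
  rw [e1, Nat.testBit_two_pow_mul_add _ hpa n]
  by_cases hn : n < 2 * i
  · rw [if_pos hn, Nat.testBit_two_pow, Bool.eq_iff_iff]
    simp only [Bool.or_eq_true, decide_eq_true_eq]
    omega
  · rw [if_neg hn]
    have e2 : 1 + 2 ^ i + 2 ^ (2 * i) = 2 ^ i * (1 + 2 ^ i) + 1 := by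
      have h2 : 2 * i = i + i := by ring
      rw [h2, pow_add]; ring
    rw [e2, Nat.testBit_two_pow_mul_add _ (Nat.one_lt_two_pow_iff.mpr (by omega)) _]
    by_cases hk : n - 2 * i < i
    · rw [if_pos hk, aux_tb_one, Bool.eq_iff_iff]
      simp only [Bool.or_eq_true, decide_eq_true_eq]
      omega
    · rw [if_neg hk]
      have e3 : 1 + 2 ^ i = 2 ^ i * 1 + 1 := by ring
      rw [e3, Nat.testBit_two_pow_mul_add _ (Nat.one_lt_two_pow_iff.mpr (by omega)) _]
      by_cases hl : n - 2 * i - i < i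
      · rw [if_pos hl, aux_tb_one, Bool.eq_iff_iff]
        simp only [Bool.or_eq_true, decide_eq_true_eq]
        omega
      · rw [if_neg hl, aux_tb_one, Bool.eq_iff_iff]
        simp only [Bool.or_eq_true, decide_eq_true_eq]
        omega

theorem stmt_10 (i m : ℕ) (hi : 2 ≤ i) (hm : m = 5 * i) :
    (((Finset.range (2 ^ m)).filter (fun x =>
        ((Finset.range m).filter (fun j => x.testBit j = true)).card = 4 ∧
        (∀ j ∈ Finset.range m, x.testBit j = true →
          (j < i ∨ j = 2 * i ∨ j = 3 * i ∨ j = 4 * i)) ∧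
        x.testBit (2 * i) = true ∧ x.testBit (3 * i) = true ∧
        x.testBit (4 * i) = true ∧
        (∀ j ∈ Finset.range m, i ≤ j → j ≠ 2 * i → j ≠ 3 * i → j ≠ 4 * i →
          x.testBit j = false) ∧
        ((Finset.range i).filter (fun j => x.testBit j = true)).card = 1)).card = i) ∧
    (∀ x ∈ (Finset.range (2 ^ m)).filter (fun x =>
        ((Finset.range m).filter (fun j => x.testBit j = true)).card = 4 ∧
        (∀ j ∈ Finset.range m, x.testBit j = true →
          (j < i ∨ j = 2 * i ∨ j = 3 * i ∨ j = 4 * i)) ∧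
        x.testBit (2 * i) = true ∧ x.testBit (3 * i) = true ∧
        x.testBit (4 * i) = true ∧
        (∀ j ∈ Finset.range m, i ≤ j → j ≠ 2 * i → j ≠ 3 * i → j ≠ 4 * i →
          x.testBit j = false) ∧
        ((Finset.range i).filter (fun j => x.testBit j = true)).card = 1),
      ∀ j < m, (∀ k < m, x.testBit ((k + j) % m) = true →
        (k < i ∨ k = 2 * i ∨ k = 3 * i ∨ k = 4 * i)) → j = 0) := by
  subst hm
  set f : ℕ → ℕ := fun a => 2 ^ a + 2 ^ (2 * i) + 2 ^ (3 * i) + 2 ^ (4 * i) with hf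
  constructor
  · -- cardinality
    have hset : ((Finset.range (2 ^ (5 * i))).filter (fun x =>
        ((Finset.range (5 * i)).filter (fun j => x.testBit j = true)).card = 4 ∧
        (∀ j ∈ Finset.range (5 * i), x.testBit j = true →
          (j < i ∨ j = 2 * i ∨ j = 3 * i ∨ j = 4 * i)) ∧
        x.testBit (2 * i) = true ∧ x.testBit (3 * i) = true ∧
        x.testBit (4 * i) = true ∧
        (∀ j ∈ Finset.range (5 * i), i ≤ j → j ≠ 2 * i → j ≠ 3 * i → j ≠ 4 * i →
          x.testBit j = false) ∧
        ((Finset.range i).filter (fun j => x.testBit j = true)).card = 1))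
        = (Finset.range i).image f := by
      ext x
      simp only [Finset.mem_filter, Finset.mem_range, Finset.mem_image]
      constructor
      · rintro ⟨hxlt, h1, h2, hb2, hb3, hb4, h6, h7⟩
        obtain ⟨a, hfa⟩ := Finset.card_eq_one.mp h7
        have hamem : a ∈ (Finset.range i).filter (fun j => x.testBit j = true) := by
          rw [hfa]; exact Finset.mem_singleton_self a
        rw [Finset.mem_filter, Finset.mem_range] at hamem
        obtain ⟨ha, hba⟩ := hamem
        refine ⟨a, ha, ?_⟩
        symm
        apply Nat.eq_of_testBit_eq
        intro n
        rw [hf]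
        simp only
        rw [aux_bit i a n hi ha]
        rcases lt_or_ge n (5 * i) with hn | hn
        · rcases lt_or_ge n i with hni | hni
          · have hmem : x.testBit n = true ↔ n = a := by
              constructor
              · intro h
                have : n ∈ (Finset.range i).filter (fun j => x.testBit j = true) :=
                  Finset.mem_filter.mpr ⟨Finset.mem_range.mpr hni, h⟩
                rw [hfa, Finset.mem_singleton] at this; exact this
              · intro h
                subst h; exact hba
            have d2 : decide (n = 2 * i) = false := by simp; omega
            have d3 : decide (n = 3 * i) = false := by simp; omega
            have d4 : decide (n = 4 * i) = false := by simp; omega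
            rw [d2, d3, d4]
            simp only [Bool.or_false]
            cases hb : x.testBit n with
            | false =>
              have hna : ¬ n = a := by
                intro h
                rw [hmem.mpr h] at hb
                simp at hb
              simp [hna]
            | true => simp [hmem.mp hb]
          · by_cases e2 : n = 2 * i
            · subst e2; simp [hb2]
            · by_cases e3 : n = 3 * i
              · subst e3; simp [hb3]
              · by_cases e4 : n = 4 * i
                · subst e4; simp [hb4]
                · rw [h6 n hn hni e2 e3 e4]
                  simp [e2, e3, e4, show n ≠ a by omega]
        · have hx2 : x < 2 ^ n := lt_of_lt_of_le hxlt (Nat.pow_le_pow_right (by norm_num) hn)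
          rw [Nat.testBit_lt_two_pow hx2]
          simp [show n ≠ a by omega, show n ≠ 2 * i by omega,
            show n ≠ 3 * i by omega, show n ≠ 4 * i by omega]
      · rintro ⟨a, ha, rfl⟩
        have hbit : ∀ n, (f a).testBit n = (decide (n = a) || decide (n = 2 * i) ||
            decide (n = 3 * i) || decide (n = 4 * i)) := fun n => aux_bit i a n hi ha
        have hflt : f a < 2 ^ (5 * i) := by
          have p1 : 2 ^ a < 2 ^ (4 * i) := Nat.pow_lt_pow_right one_lt_two (by omega)
          have p2 : 2 ^ (2 * i) ≤ 2 ^ (4 * i) := Nat.pow_le_pow_right (by norm_num) (by omega)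
          have p3 : 2 ^ (3 * i) ≤ 2 ^ (4 * i) := Nat.pow_le_pow_right (by norm_num) (by omega)
          have p4 : 2 ^ (4 * i) * 4 ≤ 2 ^ (5 * i) := by
            have : 2 ^ (4 * i) * 4 = 2 ^ (4 * i + 2) := by rw [pow_add]; ring
            rw [this]
            exact Nat.pow_le_pow_right (by norm_num) (by omega)
          have : f a < 2 ^ (4 * i) * 4 := by rw [hf]; simp only; omega
          omega
        have hfilt1 : (Finset.range (5 * i)).filter (fun j => (f a).testBit j = true)
            = {a, 2 * i, 3 * i, 4 * i} := by
          ext n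
          simp only [Finset.mem_filter, Finset.mem_range, hbit, Finset.mem_insert,
            Finset.mem_singleton, Bool.or_eq_true, decide_eq_true_eq]
          constructor
          · rintro ⟨_, h⟩; tauto
          · intro h; omega
        have hfilt2 : (Finset.range i).filter (fun j => (f a).testBit j = true) = {a} := by
          ext n
          simp only [Finset.mem_filter, Finset.mem_range, hbit, Finset.mem_singleton,
            Bool.or_eq_true, decide_eq_true_eq]
          constructor
          · rintro ⟨hn, h⟩; omega
          · intro h; subst h; simp [ha]
        refine ⟨hflt, ?_, ?_, ?_, ?_, ?_, ?_, ?_⟩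
        · rw [hfilt1]
          rw [Finset.card_insert_of_notMem (by simp; omega),
            Finset.card_insert_of_notMem (by simp; omega),
            Finset.card_insert_of_notMem (by simp; omega), Finset.card_singleton]
        · intro j _ hj
          rw [hbit] at hj
          simp only [Bool.or_eq_true, decide_eq_true_eq] at hj
          omega
        · rw [hbit]; simp
        · rw [hbit]; simp
        · rw [hbit]; simp
        · intro j _ hij hj2 hj3 hj4
          rw [hbit]
          simp [hj2, hj3, hj4, show j ≠ a by omega]
        · rw [hfilt2, Finset.card_singleton]
    rw [hset, Finset.card_image_of_injOn, Finset.card_range]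
    intro a ha b hb hab
    simp only [Finset.mem_coe, Finset.mem_range] at ha hb
    rw [hf] at hab
    simp only at hab
    have : 2 ^ a = 2 ^ b := by omega
    exact Nat.pow_right_injective (le_refl 2) this
  · -- shift condition
    intro x hx j hj H
    rw [Finset.mem_filter, Finset.mem_range] at hx
    obtain ⟨hxlt, _, _, hb2, hb3, hb4, _, h7⟩ := hx
    obtain ⟨a, hfa⟩ := Finset.card_eq_one.mp h7
    have hamem : a ∈ (Finset.range i).filter (fun j => x.testBit j = true) := by
      rw [hfa]; exact Finset.mem_singleton_self a
    rw [Finset.mem_filter, Finset.mem_range] at hamem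
    obtain ⟨ha, hba⟩ := hamem
    have key : ∀ p, p < 5 * i → x.testBit p = true →
        ((if j ≤ p then p - j else p + 5 * i - j) < i ∨
         (if j ≤ p then p - j else p + 5 * i - j) = 2 * i ∨
         (if j ≤ p then p - j else p + 5 * i - j) = 3 * i ∨
         (if j ≤ p then p - j else p + 5 * i - j) = 4 * i) := by
      intro p hp hb
      set k := if j ≤ p then p - j else p + 5 * i - j with hk
      have hk1 : k < 5 * i := by rw [hk]; split <;> omega
      have hk2 : (k + j) % (5 * i) = p := by
        rcases le_or_gt j p with h | h
        · have hkj : k + j = p := by rw [hk, if_pos h]; omega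
          rw [hkj, Nat.mod_eq_of_lt hp]
        · have hkj : k + j = p + (5 * i) * 1 := by rw [hk, if_neg (not_le.mpr h)]; omega
          rw [hkj, Nat.add_mul_mod_self_left, Nat.mod_eq_of_lt hp]
      exact H k hk1 (by rw [hk2]; exact hb)
    have c2 := key (2 * i) (by omega) hb2
    have c3 := key (3 * i) (by omega) hb3
    have c4 := key (4 * i) (by omega) hb4
    have ca := key a (by omega) hba
    split_ifs at c2 c3 c4 ca <;> omega
end

section
/- Let m = 5i with i ≥ 2, e the length-m bit sequence with 1-bits at {0,...,i-1} ∪ {2i,3i,4i}, and let y be the length-m bit sequence with 1-bits exactly at {2i, 3i, 4i}. Then the number of cyclic shifts τ^j (0 ≤ j < m) with τ^j(y) covered by e is exactly 2, namely j = 0 and j = 4i; hence y is an 'even' sequence. -/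
lemma tb3_aux (a b c p : ℕ) (hab : a < b) (hbc : b < c) :
    (2 ^ a + 2 ^ b + 2 ^ c : ℕ).testBit p = true ↔ (p = a ∨ p = b ∨ p = c) := by
  have two_lt : (1:ℕ) < 2 := by norm_num
  constructor
  · intro h
    by_contra hcon
    push_neg at hcon
    obtain ⟨ha, hb, hcc⟩ := hcon
    rcases Nat.lt_or_ge p c with hpc | hpc
    · have e : (2 ^ a + 2 ^ b + 2 ^ c : ℕ) = 2 ^ c + (2 ^ b + 2 ^ a) := by ring
      rw [e, Nat.testBit_two_pow_add_gt hpc] at h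
      rcases Nat.lt_or_ge p b with hpb | hpb
      · rw [Nat.testBit_two_pow_add_gt hpb, Nat.testBit_two_pow_of_ne (by omega)] at h
        simp at h
      · have hlt : (2 ^ b + 2 ^ a : ℕ) < 2 ^ p := by
          have h1 : (2 ^ a : ℕ) < 2 ^ b := Nat.pow_lt_pow_right two_lt hab
          have h2 : (2 ^ b : ℕ) * 2 ≤ 2 ^ p := by
            rw [← pow_succ]
            exact Nat.pow_le_pow_right (by norm_num) (by omega)
          omega
        rw [Nat.testBit_lt_two_pow hlt] at h
        simp at h
    · have hlt : (2 ^ a + 2 ^ b + 2 ^ c : ℕ) < 2 ^ p := by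
        have h1 : (2 ^ a : ℕ) < 2 ^ b := Nat.pow_lt_pow_right two_lt hab
        have h2 : (2 ^ b : ℕ) * 2 ≤ 2 ^ c := by
          rw [← pow_succ]
          exact Nat.pow_le_pow_right (by norm_num) (by omega)
        have h3 : (2 ^ c : ℕ) * 2 ≤ 2 ^ p := by
          rw [← pow_succ]
          exact Nat.pow_le_pow_right (by norm_num) (by omega)
        omega
      rw [Nat.testBit_lt_two_pow hlt] at h
      simp at h
  · rintro (rfl | rfl | rfl)
    · have e : (2 ^ p + 2 ^ b + 2 ^ c : ℕ) = 2 ^ p + (2 ^ b + 2 ^ c) := by ring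
      rw [e, Nat.testBit_two_pow_add_eq, Nat.testBit_two_pow_add_gt hab,
        Nat.testBit_two_pow_of_ne (by omega)]
      rfl
    · have e : (2 ^ a + 2 ^ p + 2 ^ c : ℕ) = 2 ^ p + (2 ^ c + 2 ^ a) := by ring
      rw [e, Nat.testBit_two_pow_add_eq, Nat.testBit_two_pow_add_gt hbc,
        Nat.testBit_two_pow_of_ne (by omega)]
      rfl
    · have e : (2 ^ a + 2 ^ b + 2 ^ p : ℕ) = 2 ^ p + (2 ^ a + 2 ^ b) := by ring
      rw [e, Nat.testBit_two_pow_add_eq]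
      have hlt : (2 ^ a + 2 ^ b : ℕ) < 2 ^ p := by
        have h1 : (2 ^ a : ℕ) < 2 ^ b := Nat.pow_lt_pow_right two_lt hab
        have h2 : (2 ^ b : ℕ) * 2 ≤ 2 ^ p := by
          rw [← pow_succ]
          exact Nat.pow_le_pow_right (by norm_num) (by omega)
        omega
      rw [Nat.testBit_lt_two_pow hlt]
      rfl

theorem stmt_11 (i m : ℕ) (hi : 2 ≤ i) (hm : m = 5 * i) :
    ((Finset.range m).filter (fun j => ∀ k ∈ Finset.range m,
        (2 ^ (2 * i) + 2 ^ (3 * i) + 2 ^ (4 * i) : ℕ).testBit ((k + j) % m) = true →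
          (k < i ∨ k = 2 * i ∨ k = 3 * i ∨ k = 4 * i)) = ({0, 4 * i} : Finset ℕ)) ∧
    ((Finset.range m).filter (fun j => ∀ k ∈ Finset.range m,
        (2 ^ (2 * i) + 2 ^ (3 * i) + 2 ^ (4 * i) : ℕ).testBit ((k + j) % m) = true →
          (k < i ∨ k = 2 * i ∨ k = 3 * i ∨ k = 4 * i))).card = 2 := by
  subst hm
  have hm0 : 0 < 5 * i := by omega
  have tb : ∀ p : ℕ, (2 ^ (2 * i) + 2 ^ (3 * i) + 2 ^ (4 * i) : ℕ).testBit p = true ↔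
      (p = 2 * i ∨ p = 3 * i ∨ p = 4 * i) :=
    fun p => tb3_aux (2 * i) (3 * i) (4 * i) p (by omega) (by omega)
  have main : ∀ j, (j < 5 * i ∧ ∀ k < 5 * i,
      (2 ^ (2 * i) + 2 ^ (3 * i) + 2 ^ (4 * i) : ℕ).testBit ((k + j) % (5 * i)) = true →
        (k < i ∨ k = 2 * i ∨ k = 3 * i ∨ k = 4 * i)) ↔ (j = 0 ∨ j = 4 * i) := by
    intro j
    constructor
    · rintro ⟨hj, H⟩
      by_contra hcon
      push_neg at hcon
      have key : ∀ t, t < 5 * i → ((t + (5 * i - j)) % (5 * i) + j) % (5 * i) = t := by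
        intro t ht
        rw [Nat.mod_add_mod]
        have e : t + (5 * i - j) + j = t + 5 * i := by omega
        rw [e, Nat.add_mod_right, Nat.mod_eq_of_lt ht]
      have unfold_mod : ∀ t : ℕ, t ≤ 4 * i → (t + (5 * i - j)) % (5 * i) = t + (5 * i - j) ∨
          (t + (5 * i - j)) % (5 * i) + 5 * i = t + (5 * i - j) := by
        intro t ht
        rcases Nat.lt_or_ge (t + (5 * i - j)) (5 * i) with h | h
        · exact Or.inl (Nat.mod_eq_of_lt h)
        · right
          rw [Nat.mod_eq_sub_mod h]
          rcases Nat.lt_or_ge (t + (5 * i - j)) (2 * (5 * i)) with h2 | h2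
          · rw [Nat.mod_eq_of_lt (by omega)]; omega
          · omega
      have h2 := H ((2 * i + (5 * i - j)) % (5 * i)) (Nat.mod_lt _ hm0)
        ((tb _).mpr (by rw [key (2 * i) (by omega)]; tauto))
      have h3 := H ((3 * i + (5 * i - j)) % (5 * i)) (Nat.mod_lt _ hm0)
        ((tb _).mpr (by rw [key (3 * i) (by omega)]; tauto))
      have h4 := H ((4 * i + (5 * i - j)) % (5 * i)) (Nat.mod_lt _ hm0)
        ((tb _).mpr (by rw [key (4 * i) (by omega)]; tauto))
      have d2 := unfold_mod (2 * i) (by omega)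
      have d3 := unfold_mod (3 * i) (by omega)
      have d4 := unfold_mod (4 * i) (by omega)
      obtain ⟨k2, hk2⟩ : ∃ x, (2 * i + (5 * i - j)) % (5 * i) = x := ⟨_, rfl⟩
      obtain ⟨k3, hk3⟩ : ∃ x, (3 * i + (5 * i - j)) % (5 * i) = x := ⟨_, rfl⟩
      obtain ⟨k4, hk4⟩ : ∃ x, (4 * i + (5 * i - j)) % (5 * i) = x := ⟨_, rfl⟩
      rw [hk2] at h2 d2
      rw [hk3] at h3 d3
      rw [hk4] at h4 d4
      omega
    · rintro (rfl | rfl)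
      · refine ⟨by omega, ?_⟩
        intro k hk htb
        rw [tb, Nat.add_zero, Nat.mod_eq_of_lt hk] at htb
        omega
      · refine ⟨by omega, ?_⟩
        intro k hk htb
        rw [tb] at htb
        have hd : (k + 4 * i) % (5 * i) = k + 4 * i ∨
            (k + 4 * i) % (5 * i) + 5 * i = k + 4 * i := by
          rcases Nat.lt_or_ge (k + 4 * i) (5 * i) with h | h
          · exact Or.inl (Nat.mod_eq_of_lt h)
          · right
            rw [Nat.mod_eq_sub_mod h, Nat.mod_eq_of_lt (by omega)]
            omega
        obtain ⟨x, hx⟩ : ∃ x, (k + 4 * i) % (5 * i) = x := ⟨_, rfl⟩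
        rw [hx] at htb hd
        omega
  constructor
  · ext j
    simp only [Finset.mem_filter, Finset.mem_range, Finset.mem_insert, Finset.mem_singleton]
    exact main j
  · apply Finset.card_eq_two.mpr
    refine ⟨0, 4 * i, by omega, ?_⟩
    ext j
    simp only [Finset.mem_filter, Finset.mem_range, Finset.mem_insert, Finset.mem_singleton]
    exact main j
end

section
/- Let m = 5i with i ≥ 2, e the length-m bit sequence with 1-bits at {0,...,i-1} ∪ {2i,3i,4i}. Let y⁽¹⁾ have 1-bits exactly at {3i, 4i} and y⁽²⁾ have 1-bits exactly at {2i, 4i}. Then: (a) y⁽¹⁾ and y⁽²⁾ are not cyclic shifts of each other; (b) the set of shifts j with τ^j(y⁽¹⁾) covered by e is {0, i, 4i}, and for y⁽²⁾ it is {0, 2i, 4i}; hence both are 'odd' sequences (3 covering shifts each). -/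
private lemma tb13 {a b : ℕ} (h : b < a) (p : ℕ) :
    ((2 ^ a + 2 ^ b : ℕ).testBit p = true) ↔ (p = a ∨ p = b) := by
  have hb : (2 : ℕ) ^ b < 2 ^ a := Nat.pow_lt_pow_right one_lt_two h
  have h1 := Nat.testBit_two_pow_mul_add 1 hb p
  rw [Nat.mul_one] at h1
  rw [h1]
  by_cases hp : p < a
  · simp only [if_pos hp, Nat.testBit_two_pow, decide_eq_true_eq]
    omega
  · simp only [if_neg hp]
    have : (1 : ℕ) = 2 ^ 0 := rfl
    rw [this, Nat.testBit_two_pow, decide_eq_true_eq]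
    omega

private lemma mod13 {x m : ℕ} (h0 : 0 < m) (h : x < 2 * m) :
    x % m = if x < m then x else x - m := by
  split
  · exact Nat.mod_eq_of_lt ‹_›
  · rw [Nat.mod_eq_sub_mod (by omega), Nat.mod_eq_of_lt (by omega)]

private lemma cancel13 {a b j m : ℕ} (ha : a < m) (hb : b < m)
    (h : (a + j) % m = (b + j) % m) : a = b := by
  have h2 : a ≡ b [MOD m] := Nat.ModEq.add_right_cancel' j h
  rwa [Nat.ModEq, Nat.mod_eq_of_lt ha, Nat.mod_eq_of_lt hb] at h2

private lemma key13 (i m a b j : ℕ) (hm : m = 5 * i) (hi : 2 ≤ i)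
    (ha : a < m) (hb : b < a) (hj : j < m) :
    ((∀ k ∈ Finset.range m, (2 ^ a + 2 ^ b : ℕ).testBit ((k + j) % m) = true →
        (k < i ∨ k = 2 * i ∨ k = 3 * i ∨ k = 4 * i)) ↔
      (((a + m - j) % m < i ∨ (a + m - j) % m = 2 * i ∨
          (a + m - j) % m = 3 * i ∨ (a + m - j) % m = 4 * i) ∧
        ((b + m - j) % m < i ∨ (b + m - j) % m = 2 * i ∨
          (b + m - j) % m = 3 * i ∨ (b + m - j) % m = 4 * i))) := by
  have hm0 : 0 < m := by omega
  have hb' : b < m := by omega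
  have hva : ((a + m - j) % m + j) % m = a := by
    rw [Nat.mod_add_mod]
    have : a + m - j + j = a + m := by omega
    rw [this, Nat.add_mod_right, Nat.mod_eq_of_lt ha]
  have hvb : ((b + m - j) % m + j) % m = b := by
    rw [Nat.mod_add_mod]
    have : b + m - j + j = b + m := by omega
    rw [this, Nat.add_mod_right, Nat.mod_eq_of_lt hb']
  constructor
  · intro H
    constructor
    · exact H _ (Finset.mem_range.mpr (Nat.mod_lt _ hm0))
        (by rw [hva]; exact (tb13 hb a).mpr (Or.inl rfl))
    · exact H _ (Finset.mem_range.mpr (Nat.mod_lt _ hm0))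
        (by rw [hvb]; exact (tb13 hb b).mpr (Or.inr rfl))
  · rintro ⟨H1, H2⟩ k hk htb
    rw [Finset.mem_range] at hk
    rcases (tb13 hb _).mp htb with h | h
    · have : k = (a + m - j) % m :=
        cancel13 hk (Nat.mod_lt _ hm0) (by rw [hva]; exact h)
      rw [this]; exact H1
    · have : k = (b + m - j) % m :=
        cancel13 hk (Nat.mod_lt _ hm0) (by rw [hvb]; exact h)
      rw [this]; exact H2

theorem stmt_13 (i m : ℕ) (hi : 2 ≤ i) (hm : m = 5 * i) :
    (¬ ∃ j < m, ∀ k < m,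
        (2 ^ (4 * i) + 2 ^ (3 * i) : ℕ).testBit ((k + j) % m) =
          (2 ^ (4 * i) + 2 ^ (2 * i) : ℕ).testBit k) ∧
    ((Finset.range m).filter (fun j => ∀ k ∈ Finset.range m,
        (2 ^ (4 * i) + 2 ^ (3 * i) : ℕ).testBit ((k + j) % m) = true →
          (k < i ∨ k = 2 * i ∨ k = 3 * i ∨ k = 4 * i)) =
      ({0, i, 4 * i} : Finset ℕ)) ∧
    ((Finset.range m).filter (fun j => ∀ k ∈ Finset.range m,
        (2 ^ (4 * i) + 2 ^ (2 * i) : ℕ).testBit ((k + j) % m) = true →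
          (k < i ∨ k = 2 * i ∨ k = 3 * i ∨ k = 4 * i)) =
      ({0, 2 * i, 4 * i} : Finset ℕ)) ∧
    Odd ((Finset.range m).filter (fun j => ∀ k ∈ Finset.range m,
        (2 ^ (4 * i) + 2 ^ (3 * i) : ℕ).testBit ((k + j) % m) = true →
          (k < i ∨ k = 2 * i ∨ k = 3 * i ∨ k = 4 * i))).card ∧
    Odd ((Finset.range m).filter (fun j => ∀ k ∈ Finset.range m,
        (2 ^ (4 * i) + 2 ^ (2 * i) : ℕ).testBit ((k + j) % m) = true →
          (k < i ∨ k = 2 * i ∨ k = 3 * i ∨ k = 4 * i))).card := by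
  have hm0 : 0 < m := by omega
  have h34 : 3 * i < 4 * i := by omega
  have h24 : 2 * i < 4 * i := by omega
  -- part (a)
  have partA : ¬ ∃ j < m, ∀ k < m,
      (2 ^ (4 * i) + 2 ^ (3 * i) : ℕ).testBit ((k + j) % m) =
        (2 ^ (4 * i) + 2 ^ (2 * i) : ℕ).testBit k := by
    rintro ⟨j, hj, H⟩
    have e1 : (2 ^ (4 * i) + 2 ^ (3 * i) : ℕ).testBit ((2 * i + j) % m) = true := by
      rw [H (2 * i) (by omega)]; exact (tb13 h24 _).mpr (Or.inr rfl)
    have e2 : (2 ^ (4 * i) + 2 ^ (3 * i) : ℕ).testBit ((4 * i + j) % m) = true := by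
      rw [H (4 * i) (by omega)]; exact (tb13 h24 _).mpr (Or.inl rfl)
    have f1 := (tb13 h34 _).mp e1
    have f2 := (tb13 h34 _).mp e2
    rw [mod13 hm0 (by omega)] at f1
    rw [mod13 hm0 (by omega)] at f2
    split at f1 <;> split at f2 <;> omega
  have set1 : (Finset.range m).filter (fun j => ∀ k ∈ Finset.range m,
        (2 ^ (4 * i) + 2 ^ (3 * i) : ℕ).testBit ((k + j) % m) = true →
          (k < i ∨ k = 2 * i ∨ k = 3 * i ∨ k = 4 * i)) =
      ({0, i, 4 * i} : Finset ℕ) := by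
    ext j
    simp only [Finset.mem_filter, Finset.mem_insert, Finset.mem_singleton]
    constructor
    · rintro ⟨hj, H⟩
      rw [Finset.mem_range] at hj
      rw [key13 i m (4 * i) (3 * i) j hm hi (by omega) h34 hj] at H
      rw [mod13 hm0 (by omega), mod13 hm0 (by omega)] at H
      split at H <;> split at H <;> omega
    · intro h
      have hj : j < m := by omega
      refine ⟨Finset.mem_range.mpr hj, ?_⟩
      rw [key13 i m (4 * i) (3 * i) j hm hi (by omega) h34 hj]
      rw [mod13 hm0 (by omega), mod13 hm0 (by omega)]
      split <;> split <;> omega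
  have set2 : (Finset.range m).filter (fun j => ∀ k ∈ Finset.range m,
        (2 ^ (4 * i) + 2 ^ (2 * i) : ℕ).testBit ((k + j) % m) = true →
          (k < i ∨ k = 2 * i ∨ k = 3 * i ∨ k = 4 * i)) =
      ({0, 2 * i, 4 * i} : Finset ℕ) := by
    ext j
    simp only [Finset.mem_filter, Finset.mem_insert, Finset.mem_singleton]
    constructor
    · rintro ⟨hj, H⟩
      rw [Finset.mem_range] at hj
      rw [key13 i m (4 * i) (2 * i) j hm hi (by omega) h24 hj] at H
      rw [mod13 hm0 (by omega), mod13 hm0 (by omega)] at H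
      split at H <;> split at H <;> omega
    · intro h
      have hj : j < m := by omega
      refine ⟨Finset.mem_range.mpr hj, ?_⟩
      rw [key13 i m (4 * i) (2 * i) j hm hi (by omega) h24 hj]
      rw [mod13 hm0 (by omega), mod13 hm0 (by omega)]
      split <;> split <;> omega
  refine ⟨partA, set1, set2, ?_, ?_⟩
  · rw [set1, Finset.card_insert_of_notMem (by simp; omega),
      Finset.card_insert_of_notMem (by simp; omega), Finset.card_singleton]
    exact ⟨1, by omega⟩
  · rw [set2, Finset.card_insert_of_notMem (by simp; omega),
      Finset.card_insert_of_notMem (by simp; omega), Finset.card_singleton]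
    exact ⟨1, by omega⟩
end

section
/- Let m = 5i, i ≥ 1, n = 2^m - 1, e = 2^{4i} + 2^{3i} + 2^{2i} + 2^i - 1. For 0 < x < n of Hamming weight 1 (x = 2^j), the number of k ∈ {0,...,m-1} with τ^k(x) covered by e equals i + 3 (the support of e has size i + 3). Hence weight-1 integers x satisfy C_{e,2,m}(x) ≡ i + 3 ≡ i + 1 mod 2: they are 'odd' iff i is even. -/
lemma auxL1 {b c : ℕ} (a t : ℕ) (hb : b < 2^c) (ht : c ≤ t) :
    (b + a * 2^c) / 2^t = a / 2^(t-c) := by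
  have h : (2:ℕ)^t = 2^c * 2^(t-c) := by rw [← pow_add]; congr 1; omega
  rw [h, ← Nat.div_div_eq_div_mul, Nat.add_mul_div_right _ _ (Nat.two_pow_pos c),
    Nat.div_eq_of_lt hb, zero_add]

lemma auxL2 {c t : ℕ} (b a : ℕ) (ht : t < c) :
    (b + a * 2^c) / 2^t % 2 = b / 2^t % 2 := by
  have h1 : (2:ℕ)^(c-t) = 2^(c-t-1) * 2 := by rw [← pow_succ]; congr 1; omega
  have h2 : (2:ℕ)^c = 2^(c-t) * 2^t := by rw [← pow_add]; congr 1; omega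
  have key : b + a * 2^c = b + (a * 2^(c-t-1)) * 2 * 2^t := by rw [h2, h1]; ring
  rw [key, Nat.add_mul_div_right _ _ (Nat.two_pow_pos t)]
  exact Nat.add_mul_mod_self_right _ _ _

lemma auxL3 {i t : ℕ} (ht : t < i) : (2^i - 1) / 2^t % 2 = 1 := by
  have hp : (2:ℕ)^(i-t) * 2^t = 2^i := by rw [← pow_add]; congr 1; omega
  have h1 : (1:ℕ) ≤ 2^t := Nat.one_le_two_pow
  have h2 : (1:ℕ) ≤ 2^(i-t) := Nat.one_le_two_pow
  have h4 : (2:ℕ)^t ≤ 2^i := Nat.pow_le_pow_right (by norm_num) (le_of_lt ht)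
  have key : (2:ℕ)^i - 1 = (2^t - 1) + (2^(i-t) - 1) * 2^t := by
    rw [Nat.sub_mul, one_mul, hp]; omega
  rw [key, Nat.add_mul_div_right _ _ (Nat.two_pow_pos t),
    Nat.div_eq_of_lt (by omega), zero_add]
  have h5 : (2:ℕ)^(i-t) = 2 * 2^(i-t-1) := by rw [← pow_succ']; congr 1; omega
  have h6 : (1:ℕ) ≤ 2^(i-t-1) := Nat.one_le_two_pow
  omega

lemma chooseTwoPow (N t : ℕ) : Nat.choose N (2^t) % 2 = N / 2^t % 2 := by
  haveI : Fact (Nat.Prime 2) := ⟨Nat.prime_two⟩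
  have hN : N < 2^(N + t + 1) :=
    lt_of_lt_of_le (Nat.lt_two_pow_self (n := N)) (Nat.pow_le_pow_right (by norm_num) (by omega))
  have ht2 : 2^t < 2^(N + t + 1) := Nat.pow_lt_pow_right (by norm_num) (by omega)
  have h := Choose.choose_modEq_prod_range_choose_nat (p := 2) hN ht2
  rw [Nat.ModEq] at h
  rw [h]
  have hprod : (∏ s ∈ Finset.range (N+t+1), Nat.choose (N / 2^s % 2) (2^t / 2^s % 2))
      = Nat.choose (N / 2^t % 2) (2^t / 2^t % 2) := by
    apply Finset.prod_eq_single_of_mem t (Finset.mem_range.mpr (by omega))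
    intro s _ hst
    have h0 : 2^t / 2^s % 2 = 0 := by
      rcases lt_or_gt_of_ne hst with hlt | hgt
      · rw [Nat.pow_div (le_of_lt hlt) (by norm_num)]
        rw [show t - s = (t - s - 1) + 1 from by omega, pow_succ]
        exact Nat.mul_mod_left _ _
      · rw [Nat.div_eq_of_lt (Nat.pow_lt_pow_right (by norm_num) hgt)]
    rw [h0, Nat.choose_zero_right]
  rw [hprod, Nat.div_self (Nat.two_pow_pos t)]
  simp [Nat.choose_one_right]

lemma eBit {i : ℕ} (hi : 1 ≤ i) {t : ℕ} (ht : t < 5*i) :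
    (2^(4*i)+2^(3*i)+2^(2*i)+2^i-1) / 2^t % 2 =
      if (t < i ∨ t = 2*i ∨ t = 3*i ∨ t = 4*i) then 1 else 0 := by
  have p1 : (2:ℕ)^(2*i) = 2^i * 2^i := by rw [← pow_add]; congr 1; ring
  have p2 : (2:ℕ)^(3*i) = 2^(2*i) * 2^i := by rw [← pow_add]; congr 1; ring
  have p3 : (2:ℕ)^(4*i) = 2^(3*i) * 2^i := by rw [← pow_add]; congr 1; ring
  have h1 : (1:ℕ) ≤ 2^i := Nat.one_le_two_pow
  have h2 : (1:ℕ) < 2^i := Nat.one_lt_two_pow_iff.mpr (by omega)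
  have key : 2^(4*i)+2^(3*i)+2^(2*i)+2^i-1
      = (2^i - 1) + (2^i + 2^(2*i) + 2^(3*i)) * 2^i := by
    rw [Nat.add_mul, Nat.add_mul, ← p1, ← p2, ← p3]; omega
  by_cases hti : t < i
  · rw [key, auxL2 _ _ hti, auxL3 hti, if_pos (Or.inl hti)]
  · push_neg at hti
    rw [key, auxL1 _ _ (by omega) hti]
    have key2 : (2:ℕ)^i + 2^(2*i) + 2^(3*i) = 0 + (1 + 2^i + 2^(2*i)) * 2^i := by
      rw [Nat.add_mul, Nat.add_mul, one_mul, ← p1, ← p2]; omega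
    by_cases hsi : t - i < i
    · rw [key2, auxL2 _ _ hsi, if_neg (by omega), Nat.zero_div]
    · push_neg at hsi
      rw [key2, auxL1 _ _ (Nat.two_pow_pos i) hsi]
      rcases Nat.eq_zero_or_pos (t - i - i) with h0 | h0
      · rw [h0, pow_zero, Nat.div_one, if_pos (Or.inr (Or.inl (by omega)))]
        have q1 : (2:ℕ)^i = 2 * 2^(i-1) := by rw [← pow_succ']; congr 1; omega
        have q2 : (2:ℕ)^(2*i) = 2 * 2^(2*i-1) := by rw [← pow_succ']; congr 1; omega
        omega
      · have key3 : (1:ℕ) + 2^i + 2^(2*i) = 1 + (1 + 2^i) * 2^i := by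
          rw [Nat.add_mul, one_mul, ← p1]; omega
        by_cases hui : t - i - i < i
        · rw [key3, auxL2 _ _ hui, if_neg (by omega),
            Nat.div_eq_of_lt (Nat.one_lt_two_pow_iff.mpr (by omega))]
        · push_neg at hui
          rw [key3, auxL1 _ _ h2 hui]
          rcases Nat.eq_zero_or_pos (t - i - i - i) with hv0 | hv0
          · rw [hv0, pow_zero, Nat.div_one, if_pos (Or.inr (Or.inr (Or.inl (by omega))))]
            have q1 : (2:ℕ)^i = 2 * 2^(i-1) := by rw [← pow_succ']; congr 1; omega
            omega
          · have key4 : (1:ℕ) + 2^i = 1 + 1 * 2^i := by rw [one_mul]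
            by_cases hvi : t - i - i - i < i
            · rw [key4, auxL2 _ _ hvi, if_neg (by omega),
                Nat.div_eq_of_lt (Nat.one_lt_two_pow_iff.mpr (by omega))]
            · push_neg at hvi
              rw [key4, auxL1 _ _ h2 hvi]
              rcases Nat.eq_zero_or_pos (t - i - i - i - i) with hw0 | hw0
              · rw [hw0, pow_zero, Nat.div_one, if_pos (Or.inr (Or.inr (Or.inr (by omega))))]
              · rw [if_neg (by omega),
                  Nat.div_eq_of_lt (Nat.one_lt_two_pow_iff.mpr (by omega))]
theorem stmt_16 (i m n e : ℕ) (hi : 1 ≤ i) (hm : m = 5 * i)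
    (hn : n = 2 ^ m - 1)
    (he : e = 2 ^ (4 * i) + 2 ^ (3 * i) + 2 ^ (2 * i) + 2 ^ i - 1)
    (j : ℕ) (hj : j < m) :
    ((Finset.range m).filter (fun k => ∀ l ∈ Finset.range m,
        (2 ^ j : ℕ).testBit ((l + k) % m) = true →
          (l < i ∨ l = 2 * i ∨ l = 3 * i ∨ l = 4 * i))).card = i + 3 ∧
    (∑ k ∈ Finset.range m, Nat.choose e ((2 ^ k * 2 ^ j) % n)) % 2 =
      (i + 1) % 2 := by
  subst hn he hm
  have hm0 : 0 < 5 * i := by omega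
  set f : ℕ → ℕ := fun k => (j + 5 * i - k) % (5 * i) with hf
  have hf_lt : ∀ k, f k < 5 * i := fun k => Nat.mod_lt _ hm0
  have hfk : ∀ k, k < 5 * i → (f k + k) % (5 * i) = j := by
    intro k hk
    show ((j + 5 * i - k) % (5 * i) + k) % (5 * i) = j
    rw [Nat.mod_add_mod, show j + 5 * i - k + k = j + 5 * i from by omega,
      Nat.add_mod_right, Nat.mod_eq_of_lt hj]
  have huniq : ∀ k l l', k < 5 * i → l < 5 * i → l' < 5 * i →
      (l + k) % (5 * i) = j → (l' + k) % (5 * i) = j → l = l' := by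
    intro k l l' hk hl hl' h h'
    have d1 := Nat.div_add_mod (l + k) (5 * i)
    have d2 := Nat.div_add_mod (l' + k) (5 * i)
    rw [h] at d1; rw [h'] at d2
    have b1 : (l + k) / (5 * i) < 2 := Nat.div_lt_of_lt_mul (by omega)
    have b2 : (l' + k) / (5 * i) < 2 := Nat.div_lt_of_lt_mul (by omega)
    generalize hq1 : (l + k) / (5 * i) = q1 at d1 b1
    generalize hq2 : (l' + k) / (5 * i) = q2 at d2 b2
    have e1 : q1 = 0 ∨ q1 = 1 := by omega
    have e2 : q2 = 0 ∨ q2 = 1 := by omega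
    rcases e1 with e1 | e1 <;> rcases e2 with e2 | e2 <;>
      rw [e1] at d1 <;> rw [e2] at d2 <;> omega
  have hinv : ∀ k, k < 5 * i → f (f k) = k := by
    intro k hk
    exact huniq (f k) (f (f k)) k (hf_lt k) (hf_lt (f k)) hk
      (hfk (f k) (hf_lt k)) (by rw [Nat.add_comm]; exact hfk k hk)
  have hcard : ((Finset.range (5 * i)).filter
      (fun l => l < i ∨ l = 2 * i ∨ l = 3 * i ∨ l = 4 * i)).card = i + 3 := by
    have hset : (Finset.range (5 * i)).filter
        (fun l => l < i ∨ l = 2 * i ∨ l = 3 * i ∨ l = 4 * i)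
        = Finset.range i ∪ {2 * i, 3 * i, 4 * i} := by
      ext x
      simp only [Finset.mem_filter, Finset.mem_range, Finset.mem_union,
        Finset.mem_insert, Finset.mem_singleton]
      omega
    rw [hset, Finset.card_union_of_disjoint, Finset.card_range]
    · rw [Finset.card_insert_of_notMem (by simp; omega),
        Finset.card_insert_of_notMem (by simp; omega), Finset.card_singleton]
    · rw [Finset.disjoint_left]
      intro a ha hb
      simp only [Finset.mem_range] at ha
      simp only [Finset.mem_insert, Finset.mem_singleton] at hb
      omega
  constructor
  · -- first part
    have hPiff : ∀ k ∈ Finset.range (5 * i),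
        ((∀ l ∈ Finset.range (5 * i), (2 ^ j : ℕ).testBit ((l + k) % (5 * i)) = true →
          (l < i ∨ l = 2 * i ∨ l = 3 * i ∨ l = 4 * i)) ↔
          (f k < i ∨ f k = 2 * i ∨ f k = 3 * i ∨ f k = 4 * i)) := by
      intro k hk
      rw [Finset.mem_range] at hk
      constructor
      · intro hP
        exact hP (f k) (Finset.mem_range.mpr (hf_lt k))
          (by rw [Nat.testBit_two_pow, hfk k hk]; simp)
      · intro hQfk l hl htb
        rw [Finset.mem_range] at hl
        rw [Nat.testBit_two_pow, decide_eq_true_eq] at htb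
        have : l = f k := huniq k l (f k) hk hl (hf_lt k) htb.symm (hfk k hk)
        rw [this]; exact hQfk
    rw [Finset.filter_congr hPiff]
    have hbij : ((Finset.range (5 * i)).filter
        (fun k => f k < i ∨ f k = 2 * i ∨ f k = 3 * i ∨ f k = 4 * i)).card
        = ((Finset.range (5 * i)).filter
        (fun l => l < i ∨ l = 2 * i ∨ l = 3 * i ∨ l = 4 * i)).card := by
      apply Finset.card_bij' (fun k _ => f k) (fun l _ => f l)
      · intro a ha
        simp only [Finset.mem_filter, Finset.mem_range] at ha ⊢
        exact ⟨hf_lt a, ha.2⟩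
      · intro a ha
        simp only [Finset.mem_filter, Finset.mem_range] at ha ⊢
        refine ⟨hf_lt a, ?_⟩
        rw [hinv a ha.1]; exact ha.2
      · intro a ha
        simp only [Finset.mem_filter, Finset.mem_range] at ha
        exact hinv a ha.1
      · intro a ha
        simp only [Finset.mem_filter, Finset.mem_range] at ha
        exact hinv a ha.1
    rw [hbij, hcard]
  · -- second part
    have h32 : (32:ℕ) ≤ 2 ^ (5 * i) := by
      calc (32:ℕ) = 2 ^ 5 := by norm_num
        _ ≤ 2 ^ (5 * i) := Nat.pow_le_pow_right (by norm_num) (by omega)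
    have hlt : ∀ r, r < 5 * i → (2:ℕ) ^ r < 2 ^ (5 * i) - 1 := by
      intro r hr
      have h1 : (2:ℕ) ^ r ≤ 2 ^ (5 * i - 1) := Nat.pow_le_pow_right (by norm_num) (by omega)
      have h2 : (2:ℕ) ^ (5 * i) = 2 * 2 ^ (5 * i - 1) := by rw [← pow_succ']; congr 1; omega
      have h3 : (2:ℕ) ≤ 2 ^ (5 * i - 1) :=
        (by norm_num : (2:ℕ) = 2 ^ 1) ▸ Nat.pow_le_pow_right (by norm_num) (by omega)
      omega
    have hmodeq : ∀ a : ℕ,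
        (2:ℕ) ^ a % (2 ^ (5 * i) - 1) = 2 ^ (a % (5 * i)) % (2 ^ (5 * i) - 1) := by
      intro a
      have hd : (2:ℕ) ^ a = (2 ^ (5 * i)) ^ (a / (5 * i)) * 2 ^ (a % (5 * i)) := by
        rw [← pow_mul, ← pow_add, Nat.div_add_mod]
      have h1 : (2:ℕ) ^ (5 * i) ≡ 1 [MOD 2 ^ (5 * i) - 1] := by
        show (2:ℕ) ^ (5 * i) % _ = 1 % _
        rw [Nat.mod_eq_sub_mod (by omega),
          show (2:ℕ) ^ (5 * i) - (2 ^ (5 * i) - 1) = 1 from by omega]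
      calc (2:ℕ) ^ a % (2 ^ (5 * i) - 1)
          = ((2 ^ (5 * i)) ^ (a / (5 * i)) * 2 ^ (a % (5 * i))) % (2 ^ (5 * i) - 1) := by
            rw [← hd]
        _ = (1 ^ (a / (5 * i)) * 2 ^ (a % (5 * i))) % (2 ^ (5 * i) - 1) :=
            Nat.ModEq.mul_right _ (h1.pow _)
        _ = 2 ^ (a % (5 * i)) % (2 ^ (5 * i) - 1) := by rw [one_pow, one_mul]
    have hrw : ∀ k, (2 ^ k * 2 ^ j) % (2 ^ (5 * i) - 1) = 2 ^ ((k + j) % (5 * i)) := by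
      intro k
      rw [← pow_add, hmodeq (k + j), Nat.mod_eq_of_lt (hlt _ (Nat.mod_lt _ hm0))]
    rw [Finset.sum_congr rfl (fun k _ => by rw [hrw k])]
    have hre : ∑ k ∈ Finset.range (5 * i),
        Nat.choose (2 ^ (4 * i) + 2 ^ (3 * i) + 2 ^ (2 * i) + 2 ^ i - 1) (2 ^ ((k + j) % (5 * i)))
        = ∑ t ∈ Finset.range (5 * i),
        Nat.choose (2 ^ (4 * i) + 2 ^ (3 * i) + 2 ^ (2 * i) + 2 ^ i - 1) (2 ^ t) := by
      apply Finset.sum_nbij' (fun k => (k + j) % (5 * i)) (fun t => (t + (5 * i - j)) % (5 * i))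
      · intro a _; exact Finset.mem_range.mpr (Nat.mod_lt _ hm0)
      · intro a _; exact Finset.mem_range.mpr (Nat.mod_lt _ hm0)
      · intro a ha
        rw [Finset.mem_range] at ha
        rw [Nat.mod_add_mod, show a + j + (5 * i - j) = a + 5 * i from by omega,
          Nat.add_mod_right, Nat.mod_eq_of_lt ha]
      · intro a ha
        rw [Finset.mem_range] at ha
        rw [Nat.mod_add_mod, show a + (5 * i - j) + j = a + 5 * i from by omega,
          Nat.add_mod_right, Nat.mod_eq_of_lt ha]
      · intro a _; rfl
    rw [hre, Finset.sum_nat_mod]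
    rw [Finset.sum_congr rfl (fun t htm => by
      rw [chooseTwoPow, eBit hi (Finset.mem_range.mp htm)])]
    rw [Finset.sum_boole]
    simp only [Nat.cast_id]
    rw [hcard]
    omega
end
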